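/- arXiv:2006.03932 — 3 statements merged into one kernel-verified Lean document; each statement's English description precedes it below -/
import Mathlib

section
/- Let ε_n, ψ ∈ ℝᵖ, ε_o ∈ ℝᵐ, and let A_n be a real p×p matrix, A_no a real p×m matrix, and Q_n, S_n, R_n real p×p matrices. Assume: (i) the block matrix [[−R_n, −S_nᵀ],[−S_n, −Q_n]] − [[A_n + A_nᵀ + κ_n I, I],[I, 0]] is positive semidefinite (i.e. the system Σ(A_n, I, I) is (−R_n, −S_nᵀ, −Q_n)-ssd(κ_n)); and (ii) ψᵀQ_nψ + 2ψᵀS_nε_n + ε_nᵀR_nε_n ≥ 0 (static (Q_n,S_n,R_n)-dissipativity of ψ against ε_n). Then ε_nᵀ(A_n + A_nᵀ)ε_n + 2ε_nᵀψ + 2ε_nᵀ(A_no ε_o) ≤ −κ_n‖ε_n‖² + 2ε_nᵀ(A_no ε_o). -/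
open Matrix

/-- dissipativity part of Lemma 1. If `Σ(A_n, I, I)` is
`(−R_n, −S_nᵀ, −Q_n)`-ssd(`κ_n`), i.e. the block matrix
`[[−R_n, −S_nᵀ],[−S_n, −Q_n]] − [[A_n + A_nᵀ + κ_n I, I],[I, 0]]` is positive semidefinite,
and `ψ` is statically `(Q_n,S_n,R_n)`-dissipative against `ε_n`, then
`ε_nᵀ(A_n + A_nᵀ)ε_n + 2ε_nᵀψ + 2ε_nᵀ(A_no ε_o) ≤ −κ_n‖ε_n‖² + 2ε_nᵀ(A_no ε_o)`. -/
theorem stmt_1 (p m : ℕ) (εn ψ : EuclideanSpace ℝ (Fin p)) (εo : Fin m → ℝ)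
    (An Qn Sn Rn : Matrix (Fin p) (Fin p) ℝ) (Ano : Matrix (Fin p) (Fin m) ℝ) (κn : ℝ)
    (h1 : (fromBlocks (-Rn) (-Snᵀ) (-Sn) (-Qn) -
        fromBlocks (An + Anᵀ + κn • (1 : Matrix (Fin p) (Fin p) ℝ))
          (1 : Matrix (Fin p) (Fin p) ℝ) (1 : Matrix (Fin p) (Fin p) ℝ)
          (0 : Matrix (Fin p) (Fin p) ℝ)).PosSemidef)
    (h2 : 0 ≤ ψ ⬝ᵥ (Qn *ᵥ ψ) + 2 * (ψ ⬝ᵥ (Sn *ᵥ εn)) + εn ⬝ᵥ (Rn *ᵥ εn)) :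
    εn ⬝ᵥ ((An + Anᵀ) *ᵥ εn) + 2 * (εn ⬝ᵥ ψ) + 2 * (εn ⬝ᵥ (Ano *ᵥ εo)) ≤
      -κn * ‖εn‖ ^ 2 + 2 * (εn ⬝ᵥ (Ano *ᵥ εo)) := by
  have key := h1.dotProduct_mulVec_nonneg (Sum.elim (εn : Fin p → ℝ) (ψ : Fin p → ℝ))
  simp only [RCLike.star_def, star_trivial, Matrix.sub_mulVec, Matrix.fromBlocks_mulVec,
    Matrix.add_mulVec, Matrix.smul_mulVec, Matrix.one_mulVec, Matrix.zero_mulVec,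
    Matrix.neg_mulVec, Sum.elim_comp_inl, Sum.elim_comp_inr, dotProduct_sub, dotProduct_add,
    dotProduct_smul, dotProduct_neg, add_zero, sumElim_dotProduct_sumElim] at key
  have hnorm : ‖εn‖ ^ 2 = (εn : Fin p → ℝ) ⬝ᵥ (εn : Fin p → ℝ) := by
    rw [EuclideanSpace.norm_eq, Real.sq_sqrt (by positivity)]
    simp [dotProduct, sq]
  have hsym : (εn : Fin p → ℝ) ⬝ᵥ (Snᵀ *ᵥ ψ) = (ψ : Fin p → ℝ) ⬝ᵥ (Sn *ᵥ εn) := by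
    rw [dotProduct_mulVec, vecMul_transpose, dotProduct_comm]
  have hcomm : (ψ : Fin p → ℝ) ⬝ᵥ (εn : Fin p → ℝ) = (εn : Fin p → ℝ) ⬝ᵥ ψ :=
    dotProduct_comm _ _
  rw [Matrix.add_mulVec, dotProduct_add, hnorm]
  simp only [smul_eq_mul] at key
  linarith [key, h2, hsym, hcomm]
end

section
/- Let κ, κ_o, κ_n, β, λ_on, λ_no be reals with κ > 0, β ≥ 0, λ_on ≥ 0, λ_no ≥ 0, κ_o > λ_no + βλ_on + κ and κ_n > λ_no + βλ_on + κ. Let ε_o : [0,∞) → ℝᵐ and ε_n : [0,∞) → ℝᵖ be functions, and let σ_o, S_n : [0,∞) → ℝ be differentiable functions such that for all t ≥ 0: σ_o(t) ≥ ‖ε_o(t)‖², S_n(t) = ‖ε_n(t)‖², σ_o′(t) ≤ −κ_o σ_o(t) + 2βλ_on‖ε_o(t)‖‖ε_n(t)‖, and S_n′(t) ≤ −κ_n S_n(t) + 2λ_no‖ε_o(t)‖‖ε_n(t)‖. Then for all t ≥ 0: ‖ε_o(t)‖² + ‖ε_n(t)‖² ≤ σ_o(t) + S_n(t) ≤ (σ_o(0)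 + ‖ε_n(0)‖²) e^{−κ t}. -/
/-- exponential convergence, Theorem 1. Under the gain conditions
`κ_o, κ_n > λ_no + βλ_on + κ` with `κ > 0`, if `σ_o ≥ ‖ε_o‖²` majorizes the measured-error
storage and `S_n = ‖ε_n‖²`, with
`σ_o′ ≤ −κ_o σ_o + 2βλ_on‖ε_o‖‖ε_n‖` and `S_n′ ≤ −κ_n S_n + 2λ_no‖ε_o‖‖ε_n‖` on `[0,∞)`,
then `‖ε_o(t)‖² + ‖ε_n(t)‖² ≤ σ_o(t) + S_n(t) ≤ (σ_o(0) + ‖ε_n(0)‖²)e^{−κt}` for `t ≥ 0`. -/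
theorem stmt_12 (m p : ℕ) (κ κo κn β lon lno : ℝ)
    (hκ : 0 < κ) (hβ : 0 ≤ β) (hlon : 0 ≤ lon) (hlno : 0 ≤ lno)
    (hκo : lno + β * lon + κ < κo) (hκn : lno + β * lon + κ < κn)
    (εo : ℝ → EuclideanSpace ℝ (Fin m)) (εn : ℝ → EuclideanSpace ℝ (Fin p))
    (σo Sn σo' Sn' : ℝ → ℝ)
    (hσo_deriv : ∀ t ∈ Set.Ici (0 : ℝ), HasDerivWithinAt σo (σo' t) (Set.Ici (0 : ℝ)) t)
    (hSn_deriv : ∀ t ∈ Set.Ici (0 : ℝ), HasDerivWithinAt Sn (Sn' t) (Set.Ici (0 : ℝ)) t)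
    (hmaj : ∀ t ∈ Set.Ici (0 : ℝ), ‖εo t‖ ^ 2 ≤ σo t)
    (hSn : ∀ t ∈ Set.Ici (0 : ℝ), Sn t = ‖εn t‖ ^ 2)
    (hσo' : ∀ t ∈ Set.Ici (0 : ℝ), σo' t ≤ -κo * σo t + 2 * β * lon * ‖εo t‖ * ‖εn t‖)
    (hSn' : ∀ t ∈ Set.Ici (0 : ℝ), Sn' t ≤ -κn * Sn t + 2 * lno * ‖εo t‖ * ‖εn t‖) :
    ∀ t ∈ Set.Ici (0 : ℝ),
      ‖εo t‖ ^ 2 + ‖εn t‖ ^ 2 ≤ σo t + Sn t ∧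
      σo t + Sn t ≤ (σo 0 + ‖εn 0‖ ^ 2) * Real.exp (-κ * t) := by
  -- g t = (σo t + Sn t) * exp (κ t) is antitone on Ici 0
  set g : ℝ → ℝ := fun t => (σo t + Sn t) * Real.exp (κ * t) with hg
  have hσnn : ∀ t ∈ Set.Ici (0:ℝ), 0 ≤ σo t := fun t ht =>
    le_trans (by positivity) (hmaj t ht)
  have hSnn : ∀ t ∈ Set.Ici (0:ℝ), 0 ≤ Sn t := fun t ht => by
    rw [hSn t ht]; positivity
  have key : ∀ t ∈ Set.Ici (0:ℝ), σo' t + Sn' t ≤ -κ * (σo t + Sn t) := by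
    intro t ht
    have h1 := hσo' t ht
    have h2 := hSn' t ht
    have h3 := hmaj t ht
    have h4 := hSn t ht
    have h5 := hσnn t ht
    have h6 := hSnn t ht
    have hc : (0:ℝ) ≤ β * lon + lno := by positivity
    have h7 : (0:ℝ) ≤ (β * lon + lno) * (‖εo t‖ - ‖εn t‖) ^ 2 := by positivity
    have h8 : (0:ℝ) ≤ (β * lon + lno) * (σo t - ‖εo t‖ ^ 2) :=
      mul_nonneg hc (by linarith)
    have h9 : (0:ℝ) ≤ (κo - (lno + β * lon + κ)) * σo t :=
      mul_nonneg (by linarith) h5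
    have h10 : (0:ℝ) ≤ (κn - (lno + β * lon + κ)) * Sn t :=
      mul_nonneg (by linarith) h6
    nlinarith [h7, h8, h9, h10]
  have hgderiv : ∀ t ∈ Set.Ici (0:ℝ),
      HasDerivWithinAt g ((σo' t + Sn' t + κ * (σo t + Sn t)) * Real.exp (κ * t))
        (Set.Ici (0:ℝ)) t := by
    intro t ht
    have h1 := (hσo_deriv t ht).add (hSn_deriv t ht)
    have h2 : HasDerivWithinAt (fun t => Real.exp (κ * t)) (κ * Real.exp (κ * t))
        (Set.Ici (0:ℝ)) t := by
      have := ((hasDerivAt_id t).const_mul κ).exp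
      simpa [mul_comm] using this.hasDerivWithinAt
    have := h1.mul h2
    convert this using 1
    · rfl
    · rfl
    · rfl
    simp only [Pi.add_apply]
    ring
  have hgcont : ContinuousOn g (Set.Ici (0:ℝ)) :=
    fun t ht => (hgderiv t ht).continuousWithinAt
  have hanti : AntitoneOn g (Set.Ici (0:ℝ)) := by
    have hd : ∀ t ∈ interior (Set.Ici (0:ℝ)),
        HasDerivAt g ((σo' t + Sn' t + κ * (σo t + Sn t)) * Real.exp (κ * t)) t := by
      intro t ht
      rw [interior_Ici] at ht
      exact (hgderiv t (Set.mem_Ici.mpr (le_of_lt ht))).hasDerivAt (Ici_mem_nhds ht)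
    apply antitoneOn_of_deriv_nonpos (convex_Ici 0) hgcont
    · intro t ht
      exact (hd t ht).differentiableAt.differentiableWithinAt
    · intro t ht
      rw [(hd t ht).deriv]
      rw [interior_Ici] at ht
      have := key t (Set.mem_Ici.mpr (le_of_lt ht))
      have hexp : (0:ℝ) < Real.exp (κ * t) := Real.exp_pos _
      nlinarith
  intro t ht
  have ht0 : (0:ℝ) ∈ Set.Ici (0:ℝ) := Set.mem_Ici.mpr le_rfl
  have hgle : g t ≤ g 0 := hanti ht0 ht ht
  constructor
  · have := hmaj t ht
    have := hSn t ht
    linarith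
  · have hgle' : (σo t + Sn t) * Real.exp (κ * t) ≤ σo 0 + ‖εn 0‖ ^ 2 := by
      simpa [hg, hSn 0 ht0] using hgle
    have hexp : (0:ℝ) < Real.exp (κ * t) := Real.exp_pos _
    rw [neg_mul, Real.exp_neg, ← div_eq_mul_inv, le_div_iff₀ hexp]
    exact hgle'
end

section
/- Let α, γ, κ, w be real numbers with α > γ > 0, κ > 0, w ≥ 0, and set μ = (α−γ)/α and T_min = −ln(μ)/κ. Let (s_k)_{k∈ℕ} be a sequence of nonnegative reals and (Δ_k)_{k∈ℕ} a sequence of reals with Δ_k ≥ T_min for all k, such that s_{k+1} ≤ s_k e^{−κΔ_k} + γ w for all k. Then for all k ∈ ℕ: s_k ≤ α w + μ^k · max(s_0 − α w, 0). In particular, if s_0 ≤ α w then s_k ≤ α w for all k, and in general s_k − α w → 0 geometrically, so every s_k eventually enters and remains in [0, α w]. -/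
/-- discrete-time ISS formulation of Theorem 2. With `μ = (α−γ)/α` and
`T_min = −ln(μ)/κ`, any nonnegative sequence satisfying `s_{k+1} ≤ s_k e^{−κΔ_k} + γw`
with dwell times `Δ_k ≥ T_min` obeys `s_k ≤ αw + μ^k·max(s_0 − αw, 0)` for all `k`;
in particular `s_0 ≤ αw` implies `s_k ≤ αw` for all `k`, and in general `s_k` eventually
enters and remains below any level `αw + ε` with `ε > 0`. -/
theorem stmt_15 (α γ κ w : ℝ) (hγ : 0 < γ) (hαγ : γ < α) (hκ : 0 < κ) (hw : 0 ≤ w)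
    (μ Tmin : ℝ) (hμ : μ = (α - γ) / α) (hTmin : Tmin = -Real.log μ / κ)
    (s : ℕ → ℝ) (Δ : ℕ → ℝ) (hs : ∀ k, 0 ≤ s k) (hΔ : ∀ k, Tmin ≤ Δ k)
    (hrec : ∀ k, s (k + 1) ≤ s k * Real.exp (-κ * Δ k) + γ * w) :
    (∀ k : ℕ, s k ≤ α * w + μ ^ k * max (s 0 - α * w) 0) ∧
    (s 0 ≤ α * w → ∀ k : ℕ, s k ≤ α * w) ∧
    (∀ ε : ℝ, 0 < ε → ∃ N : ℕ, ∀ k ≥ N, s k ≤ α * w + ε) := by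
  have hα : 0 < α := hγ.trans hαγ
  have hμ0 : 0 < μ := by rw [hμ]; exact div_pos (by linarith) (by linarith)
  have hμ1 : μ < 1 := by
    rw [hμ, div_lt_one hα]; linarith
  have hexp : ∀ k, Real.exp (-κ * Δ k) ≤ μ := by
    intro k
    have h1 : -κ * Δ k ≤ Real.log μ := by
      have := hΔ k
      rw [hTmin] at this
      have h2 : -Real.log μ ≤ κ * Δ k := by
        rw [div_le_iff₀ hκ] at this; linarith [this]
      linarith
    calc Real.exp (-κ * Δ k) ≤ Real.exp (Real.log μ) := Real.exp_le_exp.2 h1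
      _ = μ := Real.exp_log hμ0
  set M := max (s 0 - α * w) 0 with hM
  have hM0 : 0 ≤ M := le_max_right _ _
  have main : ∀ k : ℕ, s k ≤ α * w + μ ^ k * M := by
    intro k
    induction k with
    | zero => simp [hM]; rcases le_max_iff.mpr (Or.inl (le_refl (s 0 - α * w))) with h; linarith [le_max_left (s 0 - α * w) 0]
    | succ n ih =>
      have h1 : s n * Real.exp (-κ * Δ n) ≤ (α * w + μ ^ n * M) * μ := by
        calc s n * Real.exp (-κ * Δ n) ≤ s n * μ :=
              mul_le_mul_of_nonneg_left (hexp n) (hs n)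
          _ ≤ (α * w + μ ^ n * M) * μ :=
              mul_le_mul_of_nonneg_right ih hμ0.le
      have h2 := hrec n
      have hγw : γ * w + α * w * μ ≤ α * w := by
        have : α * w * μ = (α - γ) * w := by
          rw [hμ]; field_simp
        rw [this]; nlinarith
      calc s (n + 1) ≤ (α * w + μ ^ n * M) * μ + γ * w := by linarith
        _ = α * w * μ + γ * w + μ ^ (n + 1) * M := by ring
        _ ≤ α * w + μ ^ (n + 1) * M := by linarith
  refine ⟨main, ?_, ?_⟩
  · intro h0 k
    have : M = 0 := max_eq_right (by linarith)
    have hm := main k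
    rw [this] at hm
    simpa using hm
  · intro ε hε
    have htend : Filter.Tendsto (fun k : ℕ => μ ^ k * M) Filter.atTop (nhds 0) := by
      simpa using (tendsto_pow_atTop_nhds_zero_of_lt_one hμ0.le hμ1).mul_const M
    rcases (Filter.Tendsto.eventually_le_const (by linarith : (0:ℝ) < ε) htend
      |>.exists_forall_of_atTop) with ⟨N, hN⟩
    exact ⟨N, fun k hk => by have := main k; have := hN k hk; linarith [main k, hN k hk]⟩
end
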